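/- arXiv:2307.06769 — 5 statements merged into one kernel-verified Lean document; each statement's English description precedes it below -/
import Mathlib

section
/- Let (L,▷) be a pre-Lie algebra, U its universal enveloping algebra, and extend ⋆ : U × L → U by 1 ⋆ a = a and (a'·U) ⋆ a = a'·(U ⋆ a) − U ⋆ (a'▷a). Then the action is right-symmetric: (U ⋆ a) ⋆ a' = (U ⋆ a') ⋆ a for all a,a' ∈ L and U ∈ U. -/
open UniversalEnvelopingAlgebra in
/-- Let `(L,▷)` be a pre-Lie algebra (bracket `⁅a,b⁆ = a▷b − b▷a`), `U` its universal
enveloping algebra, and `⋆ : U × L → U` the Guin–Oudom action, i.e. the bilinear map with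
`1 ⋆ a = a` and `(a'·U) ⋆ a = a'·(U ⋆ a) − U ⋆ (a'▷a)`. Then the action is
right-symmetric: `(U ⋆ a) ⋆ a' = (U ⋆ a') ⋆ a`. -/
theorem guinOudom_action_right_symmetric
    {R L : Type*} [CommRing R] [LieRing L] [LieAlgebra R L]
    (t : L →ₗ[R] L →ₗ[R] L)
    (hpre : ∀ a b c : L, t a (t b c) - t (t a b) c = t b (t a c) - t (t b a) c)
    (hbr : ∀ a b : L, ⁅a, b⁆ = t a b - t b a)
    (st : UniversalEnvelopingAlgebra R L →ₗ[R] L →ₗ[R] UniversalEnvelopingAlgebra R L)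
    (h1 : ∀ a : L, st 1 a = ι R a)
    (hrec : ∀ (a' : L) (u : UniversalEnvelopingAlgebra R L) (a : L),
      st (ι R a' * u) a = ι R a' * st u a - st u (t a' a)) :
    ∀ (u : UniversalEnvelopingAlgebra R L) (a a' : L),
      st (st u a) a' = st (st u a') a := by
  set P : UniversalEnvelopingAlgebra R L → Prop :=
    fun u => ∀ a a' : L, st (st u a) a' = st (st u a') a with hPdef
  -- `st (ι x) y` explicitly
  have e : ∀ x y : L, st (ι R x) y = ι R x * ι R y - ι R (t x y) := by
    intro x y
    have h := hrec x 1 y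
    rw [mul_one] at h
    rw [h, h1, h1]
  -- base case
  have hP1 : P 1 := by
    intro a a'
    rw [h1, h1, e, e]
    rw [sub_eq_sub_iff_sub_eq_sub]
    have : ι R ⁅a, a'⁆ = ι R a * ι R a' - ι R a' * ι R a := by
      letI : LieRing (UniversalEnvelopingAlgebra R L) := LieRing.ofAssociativeRing
      letI : LieAlgebra R (UniversalEnvelopingAlgebra R L) := LieAlgebra.ofAssociativeAlgebra
      rw [LieHom.map_lie, Ring.lie_def]
    rw [← this, hbr, map_sub]
  -- P is preserved by left multiplication by `ι b`
  have hstep : ∀ (b : L) (w : UniversalEnvelopingAlgebra R L), P w → P (ι R b * w) := by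
    intro b w hw a a'
    simp only [hrec, map_sub, LinearMap.sub_apply]
    rw [hw a a', hw a (t b a'), hw (t b a) a']
    abel
  -- P is preserved by addition and scalar multiplication
  have hadd : ∀ u v, P u → P v → P (u + v) := by
    intro u v hu hv a a'
    simp only [map_add, LinearMap.add_apply, hu a a', hv a a']
  have hsmul : ∀ (r : R) u, P u → P (r • u) := by
    intro r u hu a a'
    simp only [map_smul, LinearMap.smul_apply, hu a a']
  -- key: for all u, left multiplication by u preserves P
  have key : ∀ u : UniversalEnvelopingAlgebra R L,
      ∀ w : UniversalEnvelopingAlgebra R L, P w → P (u * w) := by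
    intro u
    obtain ⟨x, rfl⟩ : ∃ x, mkAlgHom R L x = u := RingCon.mkₐ_surjective (α := R) (ringCon R L) u
    induction x using TensorAlgebra.induction with
    | algebraMap r =>
      intro w hw
      have h2 : (mkAlgHom R L) (algebraMap R _ r) * w = r • w := by
        rw [AlgHom.commutes, Algebra.smul_def]
      rw [h2]
      exact hsmul r w hw
    | ι x =>
      intro w hw
      have : (mkAlgHom R L) (TensorAlgebra.ι R x) = ι R x := rfl
      rw [this]
      exact hstep x w hw
    | mul x y hx hy =>
      intro w hw
      rw [map_mul, mul_assoc]
      exact hx _ (hy w hw)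
    | add x y hx hy =>
      intro w hw
      rw [map_add, add_mul]
      exact hadd _ _ (hx w hw) (hy w hw)
  intro u a a'
  have := key u 1 hP1
  rw [mul_one] at this
  exact this a a'
end

section
/- Let (L,▷) be a pre-Lie algebra, U its universal enveloping algebra with coproduct Δ determined by Δ(a) = a⊗1 + 1⊗a for a ∈ L, and ⋆ : U × L → U the Guin–Oudom action defined by 1 ⋆ a = a and (a'U) ⋆ a = a'(U ⋆ a) − U ⋆ (a'▷a). Then Δ(U ⋆ a) = Σ (U₍₁₎ ⋆ a) ⊗ U₍₂₎ + U₍₁₎ ⊗ (U₍₂₎ ⋆ a), i.e. ⋆ is compatible with the coalgebra structure. -/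
open UniversalEnvelopingAlgebra TensorProduct in
/-- Let `(L,▷)` be a pre-Lie algebra, `U` its universal enveloping algebra with coproduct
`Δ` determined by `Δ(a) = a⊗1 + 1⊗a` for `a ∈ L`, and `⋆ : U × L → U` the Guin–Oudom
action (`1 ⋆ a = a`, `(a'U) ⋆ a = a'(U ⋆ a) − U ⋆ (a'▷a)`). Then
`Δ(U ⋆ a) = Σ (U₍₁₎ ⋆ a) ⊗ U₍₂₎ + U₍₁₎ ⊗ (U₍₂₎ ⋆ a)`, i.e. `⋆` is compatible with the
coalgebra structure. -/
theorem guinOudom_action_coalgebra_morphism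
    {R L : Type*} [CommRing R] [LieRing L] [LieAlgebra R L]
    (t : L →ₗ[R] L →ₗ[R] L)
    (hpre : ∀ a b c : L, t a (t b c) - t (t a b) c = t b (t a c) - t (t b a) c)
    (hbr : ∀ a b : L, ⁅a, b⁆ = t a b - t b a)
    (Δ : UniversalEnvelopingAlgebra R L →ₐ[R]
      TensorProduct R (UniversalEnvelopingAlgebra R L) (UniversalEnvelopingAlgebra R L))
    (hΔ : ∀ a : L, Δ (ι R a) = ι R a ⊗ₜ[R] 1 + 1 ⊗ₜ[R] ι R a)
    (st : UniversalEnvelopingAlgebra R L →ₗ[R] L →ₗ[R] UniversalEnvelopingAlgebra R L)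
    (h1 : ∀ a : L, st 1 a = ι R a)
    (hrec : ∀ (a' : L) (u : UniversalEnvelopingAlgebra R L) (a : L),
      st (ι R a' * u) a = ι R a' * st u a - st u (t a' a)) :
    ∀ (u : UniversalEnvelopingAlgebra R L) (a : L),
      Δ (st u a)
        = (TensorProduct.map (st.flip a)
              (LinearMap.id : UniversalEnvelopingAlgebra R L →ₗ[R] _)
            + TensorProduct.map (LinearMap.id : UniversalEnvelopingAlgebra R L →ₗ[R] _)
              (st.flip a)) (Δ u) := by
  set E := UniversalEnvelopingAlgebra R L
  set F : L → (TensorProduct R E E →ₗ[R] TensorProduct R E E) := fun a =>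
    TensorProduct.map (st.flip a) LinearMap.id + TensorProduct.map LinearMap.id (st.flip a)
    with hF
  -- Key tensor computation
  have key : ∀ (a' a : L) (z : TensorProduct R E E),
      F a ((ι R a' ⊗ₜ[R] 1 + 1 ⊗ₜ[R] ι R a') * z)
        = (ι R a' ⊗ₜ[R] 1 + 1 ⊗ₜ[R] ι R a') * F a z - F (t a' a) z := by
    intro a' a z
    induction z using TensorProduct.induction_on with
    | zero => simp
    | tmul x y =>
      simp only [hF, LinearMap.add_apply, TensorProduct.map_tmul, LinearMap.id_coe, id_eq,
        add_mul, mul_add, Algebra.TensorProduct.tmul_mul_tmul, one_mul, mul_one, map_add,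
        LinearMap.flip_apply, hrec, TensorProduct.sub_tmul, TensorProduct.tmul_sub]
      abel
    | add x y hx hy =>
      simp only [mul_add, map_add, hx, hy]
      abel
  -- property
  set P : E → Prop := fun u => ∀ a : L, Δ (st u a) = F a (Δ u) with hP
  have hP1 : P 1 := by
    intro a
    rw [h1, hΔ, map_one]
    simp only [hF, LinearMap.add_apply, Algebra.TensorProduct.one_def, TensorProduct.map_tmul,
      LinearMap.id_coe, id_eq, LinearMap.flip_apply, h1]
  have hstep : ∀ (a' : L) (v : E), P v → P (ι R a' * v) := by
    intro a' v hv a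
    rw [hrec, map_sub, map_mul, hΔ, hv a, hv (t a' a), map_mul, hΔ, key]
  -- show every element satisfies Q u := ∀ v, P v → P (u * v)
  set Q : E → Prop := fun u => ∀ v : E, P v → P (u * v) with hQ
  have hQall : ∀ u : E, Q u := by
    intro u
    obtain ⟨x, rfl⟩ := RingCon.mkₐ_surjective (α := R) (UniversalEnvelopingAlgebra.ringCon R L) u
    have hmk : ∀ y : TensorAlgebra R L,
        RingCon.mkₐ R (UniversalEnvelopingAlgebra.ringCon R L) y = mkAlgHom R L y :=
      fun _ => rfl
    induction x using TensorAlgebra.induction with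
    | algebraMap r =>
      intro v hv a
      rw [hmk, AlgHom.commutes, Algebra.algebraMap_eq_smul_one, smul_mul_assoc, one_mul,
        map_smul, LinearMap.smul_apply, map_smul, map_smul, hv a]
      exact (map_smul (F a) r (Δ v)).symm
    | ι b =>
      intro v hv
      have : (mkAlgHom R L) (TensorAlgebra.ι R b) = ι R b := rfl
      rw [hmk, this]
      exact hstep b v hv
    | mul x y hx hy =>
      intro v hv
      rw [hmk] at hx hy ⊢
      rw [map_mul, mul_assoc]
      exact hx _ (hy v hv)
    | add x y hx hy =>
      intro v hv a
      rw [hmk] at hx hy ⊢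
      rw [map_add, add_mul, map_add, LinearMap.add_apply, map_add, map_add,
        hx v hv a, hy v hv a, map_add]
  intro u a
  have := hQall u 1 hP1
  simpa [hF] using this a
end

section
/- Let (L,▷) be a pre-Lie algebra, U its universal enveloping algebra, ρ : U → End(L) the algebra-morphism extension of a ↦ a▷·, and ⋆ the Guin–Oudom action. Then the generalized Leibniz rule holds: U·a = Σ U₍₂₎ ⋆ (ρ(U₍₁₎)a) for all a ∈ L and U ∈ U, where the sum is over the coproduct of U. -/
open UniversalEnvelopingAlgebra in
theorem uea_induction' {R L : Type*} [CommRing R] [LieRing L] [LieAlgebra R L]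
    {C : UniversalEnvelopingAlgebra R L → Prop}
    (halg : ∀ r, C (algebraMap R _ r)) (hι : ∀ x, C (ι R x))
    (hmul : ∀ a b, C a → C b → C (a * b)) (hadd : ∀ a b, C a → C b → C (a + b))
    (a : UniversalEnvelopingAlgebra R L) : C a := by
  obtain ⟨a, rfl⟩ : ∃ b, mkAlgHom R L b = a :=
    Quotient.inductionOn' (s₁ := (ringCon R L).toSetoid) a fun b => ⟨b, rfl⟩
  induction a using TensorAlgebra.induction with
  | algebraMap r => rw [AlgHom.commutes]; exact halg r
  | ι x => exact hι x
  | mul a b ha hb => rw [map_mul]; exact hmul _ _ ha hb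
  | add a b ha hb => rw [map_add]; exact hadd _ _ ha hb


open UniversalEnvelopingAlgebra TensorProduct in
/-- Let `(L,▷)` be a pre-Lie algebra, `U` its universal enveloping algebra,
`ρ : U → End(L)` the algebra-morphism extension of `a ↦ a▷·`, and `⋆` the Guin–Oudom
action. Then the generalized Leibniz rule holds:
`U·a = Σ U₍₂₎ ⋆ (ρ(U₍₁₎)a)` for all `a ∈ L` and `U ∈ U`, the sum being over the coproduct
`Δ U = Σ U₍₁₎ ⊗ U₍₂₎`. -/
theorem guinOudom_generalized_leibniz
    {R L : Type*} [CommRing R] [LieRing L] [LieAlgebra R L]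
    (t : L →ₗ[R] L →ₗ[R] L)
    (hpre : ∀ a b c : L, t a (t b c) - t (t a b) c = t b (t a c) - t (t b a) c)
    (hbr : ∀ a b : L, ⁅a, b⁆ = t a b - t b a)
    (Δ : UniversalEnvelopingAlgebra R L →ₐ[R]
      TensorProduct R (UniversalEnvelopingAlgebra R L) (UniversalEnvelopingAlgebra R L))
    (hΔ : ∀ a : L, Δ (ι R a) = ι R a ⊗ₜ[R] 1 + 1 ⊗ₜ[R] ι R a)
    (st : UniversalEnvelopingAlgebra R L →ₗ[R] L →ₗ[R] UniversalEnvelopingAlgebra R L)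
    (h1 : ∀ a : L, st 1 a = ι R a)
    (hrec : ∀ (a' : L) (u : UniversalEnvelopingAlgebra R L) (a : L),
      st (ι R a' * u) a = ι R a' * st u a - st u (t a' a))
    (ρ : UniversalEnvelopingAlgebra R L →ₐ[R] Module.End R L)
    (hρ : ∀ a b : L, ρ (ι R a) b = t a b) :
    ∀ (u : UniversalEnvelopingAlgebra R L) (a : L),
      u * ι R a
        = TensorProduct.lift
            (st.flip ∘ₗ (LinearMap.applyₗ a ∘ₗ ρ.toLinearMap)) (Δ u) := by
  set UU := UniversalEnvelopingAlgebra R L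
  set F : L → (UU ⊗[R] UU →ₗ[R] UU) := fun a =>
    TensorProduct.lift (st.flip ∘ₗ (LinearMap.applyₗ a ∘ₗ ρ.toLinearMap)) with hFdef
  have hF : ∀ (a : L) (x y : UU), F a (x ⊗ₜ[R] y) = st y (ρ x a) := by
    intro a x y
    simp [hFdef, LinearMap.applyₗ]
    rfl
  have key : ∀ (b a : L) (w : UU ⊗[R] UU),
      F a (((ι R b : UU) ⊗ₜ[R] (1 : UU)) * w + ((1 : UU) ⊗ₜ[R] (ι R b : UU)) * w)
        = ι R b * F a w := by
    intro b a w
    induction w using TensorProduct.induction_on with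
    | zero => simp
    | tmul x y =>
        rw [Algebra.TensorProduct.tmul_mul_tmul, Algebra.TensorProduct.tmul_mul_tmul,
          one_mul, one_mul, map_add, hF, hF, map_mul, Module.End.mul_apply, hρ,
          hrec b y (ρ x a)]
        abel
    | add w₁ w₂ h₁ h₂ =>
        simp only [mul_add, map_add] at h₁ h₂ ⊢
        rw [← h₁, ← h₂]
        abel
  have hρ1 : ∀ a : L, ρ (1 : UU) a = a := by
    intro a; rw [map_one]; rfl
  have hP1 : ∀ a : L, (1 : UU) * ι R a = F a (Δ 1) := by
    intro a
    rw [map_one, Algebra.TensorProduct.one_def, hF, hρ1, h1, one_mul]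
  have hQ : ∀ u : UU, ∀ v : UU, (∀ a, v * ι R a = F a (Δ v)) →
      ∀ a, (u * v) * ι R a = F a (Δ (u * v)) := by
    intro u
    induction u using uea_induction' with
    | halg r =>
        intro v hv a
        rw [← Algebra.smul_def, smul_mul_assoc, hv a, map_smul, map_smul]
    | hι b =>
        intro v hv a
        rw [mul_assoc, hv a, map_mul, hΔ, add_mul, ← key b a (Δ v)]
    | hmul u₁ u₂ h₁ h₂ =>
        intro v hv a
        rw [show u₁ * u₂ * v = u₁ * (u₂ * v) from mul_assoc _ _ _]
        exact h₁ (u₂ * v) (h₂ v hv) a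
    | hadd u₁ u₂ h₁ h₂ =>
        intro v hv a
        rw [add_mul, add_mul, h₁ v hv a, h₂ v hv a, map_add, map_add]
  intro u a
  have := hQ u 1 hP1 a
  rwa [mul_one] at this
end

section
/- With D = Σ_{(ℓ,k)} (k+1) z_{(ℓ,k+1)} ∂_{z_{(ℓ,k)}} and the pre-Lie product π ▷ π' = π Dπ' on polynomials, the left-multiplication extension ρ satisfies: for all β₁,…,β_k with [β_j] = 1, ρ(z^{β₁} ⋆ ⋯ ⋆ z^{β_k}) = z^{β₁}⋯z^{β_k} D^k as endomorphisms of the polynomial ring, where ⋆ is the Guin–Oudom action. -/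
open MvPolynomial

/-- The bracket `[β] = Σ (1−k) β(ℓ,k)` of a multi-index. -/
def mibrk {𝔏 : Type*} (β : (𝔏 × ℕ) →₀ ℕ) : ℤ :=
  β.sum fun x v => ((1 : ℤ) - x.2) * v

/-- With `D = Σ (k+1) z_{(ℓ,k+1)} ∂_{z_{(ℓ,k)}}` and the pre-Lie product `π ▷ π' = π Dπ'`
on polynomials, the left-multiplication extension `ρ` (the algebra morphism with
`ρ(π) = π D(·)` on the universal envelope `U`) satisfies: for all `β₁,…,β_k` with
`[β_j] = 1`, `ρ(z^{β₁} ⋆ ⋯ ⋆ z^{β_k}) = z^{β₁}⋯z^{β_k} D^k` as endomorphisms of the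
polynomial ring, where `⋆` is the Guin–Oudom action
(`1 ⋆ a = a`, `(bU) ⋆ a = b(U ⋆ a) − U ⋆ (b▷a)`). -/
theorem rho_guinOudom_eq_mul_pow {𝔏 : Type*} [Fintype 𝔏]
    (D : MvPolynomial (𝔏 × ℕ) ℝ →ₗ[ℝ] MvPolynomial (𝔏 × ℕ) ℝ)
    (hLeib : ∀ p q : MvPolynomial (𝔏 × ℕ) ℝ, D (p * q) = D p * q + p * D q)
    (hgen : ∀ x : 𝔏 × ℕ, D (X x) = ((x.2 : ℝ) + 1) • X (x.1, x.2 + 1))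
    {U : Type*} [Ring U] [Algebra ℝ U]
    -- `U` plays the role of the universal envelope of the pre-Lie algebra `π ▷ π' = π Dπ'`
    (j : MvPolynomial (𝔏 × ℕ) ℝ →ₗ[ℝ] U)
    (hcomm : ∀ p q : MvPolynomial (𝔏 × ℕ) ℝ,
      j p * j q - j q * j p = j (p * D q - q * D p))
    (st : U →ₗ[ℝ] MvPolynomial (𝔏 × ℕ) ℝ →ₗ[ℝ] U)
    (h1 : ∀ p, st 1 p = j p)
    (hrec : ∀ (q : MvPolynomial (𝔏 × ℕ) ℝ) (u : U) (p : MvPolynomial (𝔏 × ℕ) ℝ),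
      st (j q * u) p = j q * st u p - st u (q * D p))
    (ρ : U →ₐ[ℝ] Module.End ℝ (MvPolynomial (𝔏 × ℕ) ℝ))
    (hρ : ∀ p : MvPolynomial (𝔏 × ℕ) ℝ,
      ρ (j p) = (LinearMap.mulLeft ℝ p) ∘ₗ D) :
    ∀ l : List ((𝔏 × ℕ) →₀ ℕ), (∀ β ∈ l, mibrk β = 1) →
      ρ (l.foldl (fun u β => st u (monomial β (1 : ℝ))) 1)
        = (LinearMap.mulLeft ℝ ((l.map fun β => monomial β (1 : ℝ)).prod)) ∘ₗ
            ((D : Module.End ℝ (MvPolynomial (𝔏 × ℕ) ℝ)) ^ l.length) := by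

  intro l _
  -- Notation
  set R := MvPolynomial (𝔏 × ℕ) ℝ with hRdef
  -- `D 1 = 0`
  have hD1 : D 1 = 0 := by
    have h := hLeib 1 1
    simp only [mul_one, one_mul] at h
    exact (left_eq_add.mp h)
  -- The iterated Guin–Oudom action
  set Φ : List R → U → U := fun ps u => ps.foldl (fun u p => st u p) u with hΦdef
  have Φ_nil : ∀ u : U, Φ [] u = u := fun _ => rfl
  have Φ_cons : ∀ (p : R) (ps : List R) (u : U), Φ (p :: ps) u = Φ ps (st u p) :=
    fun _ _ _ => rfl
  have Φ_sub : ∀ (ps : List R) (u v : U), Φ ps (u - v) = Φ ps u - Φ ps v := by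
    intro ps
    induction ps with
    | nil => intro u v; rfl
    | cons p ps ih =>
      intro u v
      rw [Φ_cons, Φ_cons, Φ_cons, show st (u - v) p = st u p - st v p by
        rw [map_sub]; rfl, ih]
  -- Key algebraic lemma: pushing a left multiplication through Φ
  have hL : ∀ (ps : List R) (q : R) (u : U), Φ ps (j q * u)
      = j q * Φ ps u - ∑ i ∈ Finset.range ps.length,
          Φ (ps.set i (q * D (ps.getD i 0))) u := by
    intro ps
    induction ps with
    | nil => intro q u; simp [Φ_nil]
    | cons p ps ih =>
      intro q u
      rw [Φ_cons, hrec, Φ_sub, ih, List.length_cons, Finset.sum_range_succ']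
      simp only [List.getD_cons_zero, List.getD_cons_succ, List.set_cons_zero,
        List.set_cons_succ]
      simp only [Φ_cons]
      rw [sub_sub]
  -- Leibniz rule for list products
  have hDP : ∀ (q : R) (ps : List R),
      ∑ i ∈ Finset.range ps.length, (ps.set i (q * D (ps.getD i 0))).prod
        = q * D ps.prod := by
    intro q ps
    induction ps with
    | nil => simp [hD1]
    | cons a ps ih =>
      rw [List.length_cons, Finset.sum_range_succ']
      simp only [List.getD_cons_zero, List.getD_cons_succ, List.set_cons_zero,
        List.set_cons_succ, List.prod_cons]
      rw [← Finset.mul_sum, ih, hLeib]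
      ring
  -- Main computation
  have hM : ∀ (n : ℕ) (ps : List R), ps.length = n →
      ρ (Φ ps 1) = (LinearMap.mulLeft ℝ ps.prod) ∘ₗ ((D : Module.End ℝ R) ^ n) := by
    intro n
    induction n with
    | zero =>
      intro ps hps
      rw [List.length_eq_zero_iff] at hps
      subst hps
      rw [Φ_nil, map_one, List.prod_nil, pow_zero]
      ext r
      simp
    | succ n ih =>
      intro ps hps
      obtain ⟨p, ps', rfl⟩ : ∃ p ps', ps = p :: ps' := by
        cases ps with
        | nil => simp at hps
        | cons p ps' => exact ⟨p, ps', rfl⟩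
      have hlen : ps'.length = n := by simpa using hps
      rw [Φ_cons, h1, ← mul_one (j p), hL, map_sub, map_mul, hρ, map_sum,
        Finset.sum_congr rfl (fun i (hi : i ∈ Finset.range ps'.length) =>
          ih (ps'.set i (p * D (ps'.getD i 0))) (by simp [hlen])),
        ih ps' hlen]
      refine LinearMap.ext fun r => ?_
      simp only [LinearMap.sub_apply, LinearMap.coe_comp, Function.comp_apply,
        LinearMap.mulLeft_apply, LinearMap.sum_apply,
        Module.End.mul_apply]
      rw [hLeib, ← Finset.sum_mul, hDP, List.prod_cons,
        show ((D : Module.End ℝ R) ^ (n + 1)) r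
            = D (((D : Module.End ℝ R) ^ n) r) by
          rw [pow_succ']; rfl]
      ring
  have hfold : l.foldl (fun u β => st u (monomial β (1 : ℝ))) 1
      = Φ (l.map fun β => (monomial β (1 : ℝ) : R)) 1 :=
    List.foldl_map.symm
  rw [hfold, hM l.length (l.map fun β => (monomial β (1 : ℝ) : R)) (by simp)]
end

section
/- Let D be the derivation above and for each ℓ ∈ 𝔏, define π ▷_ℓ π' as the polynomial obtained by applying Σ_k (1/k!)(D^k π) ∂_{z_{(ℓ,k)}} to π'. Then for each ℓ, ▷_ℓ is a pre-Lie product on the span T of monomials z^γ with [γ] = 1, and the family {▷_ℓ}_{ℓ∈𝔏} forms a multi pre-Lie algebra: π ▷_ℓ (π' ▷_{ℓ'} π'') − (π ▷_ℓ π') ▷_{ℓ'} π'' = π' ▷_{ℓ'} (π ▷_ℓ π'') − (π' ▷_{ℓ'} π) ▷_ℓ π'' for all ℓ, ℓ'. -/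
open MvPolynomial

/-- `T` : the span of the monomials `z^γ` with `[γ] = 1`. -/
noncomputable def Tspan (𝔏 : Type*) : Submodule ℝ (MvPolynomial (𝔏 × ℕ) ℝ) :=
  Submodule.span ℝ {p | ∃ γ : (𝔏 × ℕ) →₀ ℕ, mibrk γ = 1 ∧ p = monomial γ (1 : ℝ)}

/-- `π ▷_ℓ π' := (Σ_k (1/k!)(D^k π) ∂_{z_{(ℓ,k)}}) π'` (the sum is effectively finite). -/
noncomputable def triIns {𝔏 : Type*} [DecidableEq 𝔏]
    (D : MvPolynomial (𝔏 × ℕ) ℝ →ₗ[ℝ] MvPolynomial (𝔏 × ℕ) ℝ) (ℓ : 𝔏)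
    (π π' : MvPolynomial (𝔏 × ℕ) ℝ) : MvPolynomial (𝔏 × ℕ) ℝ :=
  ∑ x ∈ π'.vars.filter (fun x => x.1 = ℓ),
    ((Nat.factorial x.2 : ℝ))⁻¹ •
      (((D : Module.End ℝ (MvPolynomial (𝔏 × ℕ) ℝ)) ^ x.2) π * pderiv x π')

namespace TriAux

open Finset

set_option linter.unusedSectionVars false

variable {𝔏 : Type*} [DecidableEq 𝔏]

theorem mibrk_add (α β : (𝔏 × ℕ) →₀ ℕ) : mibrk (α + β) = mibrk α + mibrk β :=
  Finsupp.sum_add_index' (fun a => by simp) (fun a b₁ b₂ => by push_cast; ring)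

theorem mibrk_single (x : 𝔏 × ℕ) (n : ℕ) :
    mibrk (Finsupp.single x n) = ((1 : ℤ) - x.2) * n :=
  Finsupp.sum_single_index (by simp)

/-- graded piece -/
noncomputable def W (𝔏 : Type*) (c : ℤ) : Submodule ℝ (MvPolynomial (𝔏 × ℕ) ℝ) :=
  Submodule.span ℝ {p | ∃ γ : (𝔏 × ℕ) →₀ ℕ, mibrk γ = c ∧ p = monomial γ (1 : ℝ)}

theorem mono_mem_W {γ : (𝔏 × ℕ) →₀ ℕ} {c : ℤ} (h : mibrk γ = c) :
    (monomial γ (1:ℝ)) ∈ W 𝔏 c :=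
  Submodule.subset_span ⟨γ, h, rfl⟩

theorem W_mul {c d : ℤ} {p q : MvPolynomial (𝔏 × ℕ) ℝ}
    (hp : p ∈ W 𝔏 c) (hq : q ∈ W 𝔏 d) : p * q ∈ W 𝔏 (c + d) := by
  have h := Submodule.mul_mem_mul hp hq
  rw [W, W, Submodule.span_mul_span] at h
  refine Submodule.span_le.2 ?_ h
  rintro r ⟨a, ⟨γ, hγ, rfl⟩, b, ⟨δ, hδ, rfl⟩, rfl⟩
  show (monomial γ) (1:ℝ) * (monomial δ) 1 ∈ _
  rw [monomial_mul, one_mul]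
  exact Submodule.subset_span ⟨γ + δ, by rw [mibrk_add, hγ, hδ], rfl⟩


theorem W_cast {c d : ℤ} (h : c = d) {p : MvPolynomial (𝔏 × ℕ) ℝ} (hp : p ∈ W 𝔏 c) :
    p ∈ W 𝔏 d := h ▸ hp

variable (D : MvPolynomial (𝔏 × ℕ) ℝ →ₗ[ℝ] MvPolynomial (𝔏 × ℕ) ℝ)
variable (hLeib : ∀ p q : MvPolynomial (𝔏 × ℕ) ℝ, D (p * q) = D p * q + p * D q)
variable (hgen : ∀ x : 𝔏 × ℕ, D (X x) = ((x.2 : ℝ) + 1) • X (x.1, x.2 + 1))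

include hLeib in
theorem D_one : D 1 = 0 := by
  have h := hLeib 1 1
  simp only [one_mul, mul_one] at h
  exact (left_eq_add.mp h)

include hLeib hgen in
theorem DX_mem (x : 𝔏 × ℕ) : D (X x) ∈ W 𝔏 (mibrk (Finsupp.single x 1) - 1) := by
  rw [hgen x]
  refine Submodule.smul_mem _ _ ?_
  rw [X]
  refine mono_mem_W ?_
  rw [mibrk_single, mibrk_single]
  push_cast; ring

include hLeib hgen in
theorem DXpow_mem (x : 𝔏 × ℕ) (n : ℕ) :
    D ((X x : MvPolynomial (𝔏 × ℕ) ℝ) ^ n) ∈ W 𝔏 (mibrk (Finsupp.single x n) - 1) := by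
  induction n with
  | zero =>
    rw [pow_zero, D_one D hLeib]
    exact zero_mem _
  | succ n ih =>
    rw [pow_succ, hLeib]
    have hXn : (X x : MvPolynomial (𝔏 × ℕ) ℝ) ^ n ∈ W 𝔏 (mibrk (Finsupp.single x n)) := by
      rw [X_pow_eq_monomial]; exact mono_mem_W rfl
    have hX : (X x : MvPolynomial (𝔏 × ℕ) ℝ) ∈ W 𝔏 (mibrk (Finsupp.single x 1)) := by
      rw [X]; exact mono_mem_W rfl
    have e : mibrk (Finsupp.single x n) - 1 + mibrk (Finsupp.single x 1)
        = mibrk (Finsupp.single x (n+1)) - 1 := by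
      rw [mibrk_single, mibrk_single, mibrk_single]; push_cast; ring
    have e' : mibrk (Finsupp.single x n) + (mibrk (Finsupp.single x 1) - 1)
        = mibrk (Finsupp.single x (n+1)) - 1 := by
      rw [mibrk_single, mibrk_single, mibrk_single]; push_cast; ring
    exact add_mem (W_cast e (W_mul ih hX)) (W_cast e' (W_mul hXn (DX_mem D hLeib hgen x)))

include hLeib hgen in
theorem Dmono (γ : (𝔏 × ℕ) →₀ ℕ) :
    D (monomial γ (1:ℝ)) ∈ W 𝔏 (mibrk γ - 1) := by
  induction γ using Finsupp.induction with
  | zero =>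
    rw [monomial_zero', map_one, D_one D hLeib]
    exact zero_mem _
  | single_add x n γ' hx hn ih =>
    have hsplit : monomial (Finsupp.single x n + γ') (1:ℝ)
        = (X x : MvPolynomial (𝔏 × ℕ) ℝ) ^ n * monomial γ' 1 := by
      rw [X_pow_eq_monomial, monomial_mul, one_mul]
    rw [hsplit, hLeib]
    have hXn : (X x : MvPolynomial (𝔏 × ℕ) ℝ) ^ n ∈ W 𝔏 (mibrk (Finsupp.single x n)) := by
      rw [X_pow_eq_monomial]; exact mono_mem_W rfl
    have hm : (monomial γ' (1:ℝ)) ∈ W 𝔏 (mibrk γ') := mono_mem_W rfl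
    have e : mibrk (Finsupp.single x n) - 1 + mibrk γ'
        = mibrk (Finsupp.single x n + γ') - 1 := by rw [mibrk_add]; ring
    have e' : mibrk (Finsupp.single x n) + (mibrk γ' - 1)
        = mibrk (Finsupp.single x n + γ') - 1 := by rw [mibrk_add]; ring
    exact add_mem (W_cast e (W_mul (DXpow_mem D hLeib hgen x n) hm))
      (W_cast e' (W_mul hXn ih))

include hLeib hgen in
theorem Dmem {c : ℤ} {p : MvPolynomial (𝔏 × ℕ) ℝ} (hp : p ∈ W 𝔏 c) :
    D p ∈ W 𝔏 (c - 1) := by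
  induction hp using Submodule.span_induction with
  | mem x h =>
    obtain ⟨γ, hγ, rfl⟩ := h
    exact W_cast (by rw [hγ]) (Dmono D hLeib hgen γ)
  | zero => rw [map_zero]; exact zero_mem _
  | add x y _ _ hx hy => rw [map_add]; exact add_mem hx hy
  | smul a x _ hx => rw [map_smul]; exact Submodule.smul_mem _ _ hx

include hLeib hgen in
theorem Dpow_mem {c : ℤ} {p : MvPolynomial (𝔏 × ℕ) ℝ} (hp : p ∈ W 𝔏 c) (k : ℕ) :
    ((D : Module.End ℝ (MvPolynomial (𝔏 × ℕ) ℝ)) ^ k) p ∈ W 𝔏 (c - k) := by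
  induction k with
  | zero => simpa using hp
  | succ k ih =>
    rw [pow_succ', Module.End.mul_apply]
    exact W_cast (by push_cast; ring) (Dmem D hLeib hgen ih)

theorem pderiv_mem {c : ℤ} {p : MvPolynomial (𝔏 × ℕ) ℝ} (hp : p ∈ W 𝔏 c) (x : 𝔏 × ℕ) :
    pderiv x p ∈ W 𝔏 (c - 1 + x.2) := by
  induction hp using Submodule.span_induction with
  | mem q h =>
    obtain ⟨γ, hγ, rfl⟩ := h
    rw [pderiv_monomial, one_mul]
    rcases Nat.eq_zero_or_pos (γ x) with h0 | h0
    · rw [h0]; push_cast; rw [monomial_zero]; exact zero_mem _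
    · have hle : Finsupp.single x 1 ≤ γ := Finsupp.single_le_iff.mpr h0
      have : monomial (γ - Finsupp.single x 1) ((γ x : ℝ))
          = (γ x : ℝ) • monomial (γ - Finsupp.single x 1) (1:ℝ) := by
        rw [smul_monomial, smul_eq_mul, mul_one]
      rw [this]
      refine Submodule.smul_mem _ _ (mono_mem_W ?_)
      have hadd : mibrk (γ - Finsupp.single x 1) + mibrk (Finsupp.single x 1) = mibrk γ := by
        rw [← mibrk_add, tsub_add_cancel_of_le hle]
      rw [mibrk_single] at hadd
      omega
  | zero => rw [map_zero]; exact zero_mem _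
  | add a b _ _ ha hb => rw [map_add]; exact add_mem ha hb
  | smul a q _ hq => rw [(pderiv x).map_smul]; exact Submodule.smul_mem _ _ hq


/-- `D` as a derivation. -/
noncomputable def Dd (hLeib : ∀ p q : MvPolynomial (𝔏 × ℕ) ℝ, D (p * q) = D p * q + p * D q) :
    Derivation ℝ (MvPolynomial (𝔏 × ℕ) ℝ) (MvPolynomial (𝔏 × ℕ) ℝ) :=
  Derivation.mk' D (fun a b => by rw [hLeib a b, smul_eq_mul, smul_eq_mul]; ring)

include hLeib hgen in
theorem pderiv_D (x : 𝔏 × ℕ) (q : MvPolynomial (𝔏 × ℕ) ℝ) :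
    pderiv x (D q) = D (pderiv x q) + (x.2 : ℝ) • pderiv (x.1, x.2 - 1) q := by
  have key : ⁅(pderiv x : Derivation ℝ (MvPolynomial (𝔏 × ℕ) ℝ) (MvPolynomial (𝔏 × ℕ) ℝ)),
      Dd D hLeib⁆ = (x.2 : ℝ) • (pderiv (x.1, x.2 - 1)) := by
    apply derivation_ext
    intro y
    have h2 : Dd D hLeib ((pderiv x) (X y)) = 0 := by
      rcases eq_or_ne y x with rfl | hne
      · rw [pderiv_X_self]; exact (Dd D hLeib).map_one_eq_zero
      · rw [pderiv_X_of_ne hne]; exact map_zero _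
    rw [Derivation.commutator_apply, h2, sub_zero, Derivation.smul_apply]
    show (pderiv x) (D (X y)) = _
    rw [hgen y, (pderiv x).map_smul]
    rcases eq_or_ne x (y.1, y.2 + 1) with rfl | hne
    · rw [pderiv_X_self]
      rw [show ((y.1, y.2 + 1).1, (y.1, y.2 + 1).2 - 1) = y from by simp, pderiv_X_self]
      norm_num
    · rw [pderiv_X_of_ne (Ne.symm hne), smul_zero]
      rcases Nat.eq_zero_or_pos x.2 with h0 | hpos
      · rw [h0]; norm_num
      · have hy : y ≠ (x.1, x.2 - 1) := by
          rintro rfl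
          exact hne (by simp [Prod.ext_iff]; omega)
        rw [pderiv_X_of_ne hy, smul_zero]
  have hq := congrArg (fun (E : Derivation ℝ (MvPolynomial (𝔏 × ℕ) ℝ)
      (MvPolynomial (𝔏 × ℕ) ℝ)) => E q) key
  simp only [Derivation.commutator_apply, Derivation.smul_apply] at hq
  have : (pderiv x) (D q) = (x.2 : ℝ) • (pderiv (x.1, x.2 - 1)) q + Dd D hLeib ((pderiv x) q) :=
    eq_add_of_sub_eq hq
  rw [this]
  show _ = D ((pderiv x) q) + _
  abel


theorem sum_pascal {M : Type*} [AddCommMonoid M] [Module ℝ M] (n : ℕ) (c : ℕ → ℕ) (F : ℕ → M) :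
    ∑ i ∈ range (n + 2), (((n+1).choose i * c i : ℕ) : ℝ) • F i
      = ∑ i ∈ range (n + 1), ((n.choose i * c i : ℕ) : ℝ) • F i
        + ∑ i ∈ range (n + 1), ((n.choose i * c (i+1) : ℕ) : ℝ) • F (i + 1) := by
  rw [Finset.sum_range_succ' (fun i => (((n+1).choose i * c i : ℕ) : ℝ) • F i) (n+1)]
  have hsplit : ∀ i, (((n+1).choose (i+1) * c (i+1) : ℕ) : ℝ) • F (i+1)
      = ((n.choose (i+1) * c (i+1) : ℕ) : ℝ) • F (i+1)
        + ((n.choose i * c (i+1) : ℕ) : ℝ) • F (i+1) := by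
    intro i
    rw [← add_smul]
    congr 1
    rw [Nat.choose_succ_succ']
    push_cast; ring
  rw [Finset.sum_congr rfl (fun i _ => hsplit i), Finset.sum_add_distrib]
  have h1 : ∑ i ∈ range (n + 1), ((n.choose (i+1) * c (i+1) : ℕ) : ℝ) • F (i+1)
      + (((n+1).choose 0 * c 0 : ℕ) : ℝ) • F 0
      = ∑ i ∈ range (n + 1), ((n.choose i * c i : ℕ) : ℝ) • F i := by
    rw [Finset.sum_range_succ' (fun i => ((n.choose i * c i : ℕ) : ℝ) • F i) n]
    rw [Finset.sum_range_succ]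
    simp [Nat.choose_succ_self]
  rw [add_right_comm, add_assoc, ← add_assoc, h1]


/-- `D^k` as a linear map. -/
noncomputable def Dp (k : ℕ) : MvPolynomial (𝔏 × ℕ) ℝ →ₗ[ℝ] MvPolynomial (𝔏 × ℕ) ℝ :=
  ((D : Module.End ℝ (MvPolynomial (𝔏 × ℕ) ℝ)) ^ k)

theorem Dp_zero (p : MvPolynomial (𝔏 × ℕ) ℝ) : Dp D 0 p = p := rfl

theorem Dp_succ (k : ℕ) (p : MvPolynomial (𝔏 × ℕ) ℝ) : Dp D (k+1) p = Dp D k (D p) := by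
  show ((D : Module.End ℝ (MvPolynomial (𝔏 × ℕ) ℝ)) ^ (k+1)) p = _
  rw [pow_succ, Module.End.mul_apply]; rfl

theorem Dp_succ' (k : ℕ) (p : MvPolynomial (𝔏 × ℕ) ℝ) : Dp D (k+1) p = D (Dp D k p) := by
  show ((D : Module.End ℝ (MvPolynomial (𝔏 × ℕ) ℝ)) ^ (k+1)) p = _
  rw [pow_succ', Module.End.mul_apply]; rfl

include hLeib hgen in
theorem pderiv_D' (m : 𝔏) (k : ℕ) (q : MvPolynomial (𝔏 × ℕ) ℝ) :
    pderiv (m, k) (D q) = D (pderiv (m, k) q) + (k : ℝ) • pderiv (m, k - 1) q :=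
  pderiv_D D hLeib hgen (m, k) q

include hLeib in
theorem Dpow_mul (n : ℕ) (p q : MvPolynomial (𝔏 × ℕ) ℝ) :
    Dp D n (p * q) = ∑ i ∈ range (n+1), ((n.choose i : ℕ) : ℝ) • (Dp D i p * Dp D (n-i) q) := by
  induction n with
  | zero => simp [Dp_zero]
  | succ n ih =>
    have step : Dp D (n+1) (p * q)
        = ∑ i ∈ range (n+1), ((n.choose i * 1 : ℕ) : ℝ) • (Dp D (i+1) p * Dp D (n-i) q)
          + ∑ i ∈ range (n+1), ((n.choose i * 1 : ℕ) : ℝ) • (Dp D i p * Dp D (n+1-i) q) := by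
      rw [Dp_succ', ih, map_sum, ← Finset.sum_add_distrib]
      refine Finset.sum_congr rfl fun i hi => ?_
      rw [map_smul, hLeib, smul_add, Nat.mul_one]
      congr 1
      · rw [← Dp_succ']
      · rw [← Dp_succ']
        have e : n - i + 1 = n + 1 - i := by
          have : i ≤ n := Nat.lt_succ_iff.mp (Finset.mem_range.mp hi)
          omega
        rw [e]
    rw [step]
    have hP := sum_pascal (n := n) (fun _ => 1) (fun i => Dp D i p * Dp D (n+1-i) q)
    simp only [Nat.succ_sub_succ] at hP
    have hQ : ∑ i ∈ range (n + 1 + 1), (((n+1).choose i : ℕ) : ℝ) •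
        (Dp D i p * Dp D (n+1-i) q)
        = ∑ i ∈ range (n + 2), (((n+1).choose i * 1 : ℕ) : ℝ) • (Dp D i p * Dp D (n+1-i) q) := by
      simp [Nat.mul_one]
    rw [hQ, hP, add_comm]

include hLeib hgen in
theorem pderiv_Dpow (x : 𝔏 × ℕ) (n : ℕ) (q : MvPolynomial (𝔏 × ℕ) ℝ) :
    pderiv x (Dp D n q) = ∑ i ∈ range (n+1),
      ((n.choose i * x.2.descFactorial i : ℕ) : ℝ) • Dp D (n-i) (pderiv (x.1, x.2 - i) q) := by
  induction n generalizing q with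
  | zero => simp [Dp_zero]
  | succ n ih =>
    rw [Dp_succ, ih (D q)]
    have step : ∀ i ∈ range (n+1),
        ((n.choose i * x.2.descFactorial i : ℕ) : ℝ) • Dp D (n-i) (pderiv (x.1, x.2 - i) (D q))
        = ((n.choose i * x.2.descFactorial i : ℕ) : ℝ) •
            Dp D (n+1-i) (pderiv (x.1, x.2 - i) q)
          + ((n.choose i * x.2.descFactorial (i+1) : ℕ) : ℝ) •
            Dp D (n-i) (pderiv (x.1, x.2 - (i+1)) q) := by
      intro i hi
      rw [pderiv_D' D hLeib hgen x.1 (x.2 - i) q, map_add, map_smul, smul_add, smul_smul]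
      congr 1
      · rw [← Dp_succ]
        have e : n - i + 1 = n + 1 - i := by
          have h' : i ≤ n := Nat.lt_succ_iff.mp (Finset.mem_range.mp hi)
          omega
        rw [e]
      · have hc : ((n.choose i * x.2.descFactorial i : ℕ) : ℝ) * ((x.2 - i : ℕ) : ℝ)
            = ((n.choose i * x.2.descFactorial (i+1) : ℕ) : ℝ) := by
          push_cast [Nat.descFactorial_succ]
          ring
        have hv : x.2 - i - 1 = x.2 - (i+1) := by omega
        rw [hc, hv]
    rw [Finset.sum_congr rfl step, Finset.sum_add_distrib]
    have hP := sum_pascal (n := n) (fun i => x.2.descFactorial i)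
      (fun i => Dp D (n+1-i) (pderiv (x.1, x.2 - i) q))
    simp only [Nat.succ_sub_succ] at hP
    rw [hP]


theorem fact_inv_descF (k i : ℕ) :
    (((k+i).factorial : ℝ))⁻¹ * (((k+i).descFactorial i : ℕ) : ℝ) = ((k.factorial : ℝ))⁻¹ := by
  have hm := Nat.factorial_mul_descFactorial (n := k+i) (k := i) (by omega)
  have h : (k + i) - i = k := by omega
  rw [h] at hm
  have h1 : ((k+i).factorial : ℝ) ≠ 0 := Nat.cast_ne_zero.mpr (Nat.factorial_ne_zero _)
  have h2 : ((k).factorial : ℝ) ≠ 0 := Nat.cast_ne_zero.mpr (Nat.factorial_ne_zero _)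
  field_simp
  rw [← hm]
  push_cast
  ring

theorem pderiv_comm (u v : 𝔏 × ℕ) (p : MvPolynomial (𝔏 × ℕ) ℝ) :
    pderiv u (pderiv v p) = pderiv v (pderiv u p) := by
  induction p using MvPolynomial.induction_on with
  | C a => simp
  | add p q hp hq => simp only [map_add, hp, hq]
  | mul_X p s hp =>
    have hX : ∀ w z : 𝔏 × ℕ,
        (pderiv w) ((pderiv z) (X s : MvPolynomial (𝔏 × ℕ) ℝ)) = 0 := by
      intro w z
      rcases eq_or_ne s z with rfl | h
      · rw [pderiv_X_self]; simp
      · rw [pderiv_X_of_ne h]; simp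
    simp only [pderiv_mul, map_add, hp, hX]
    ring

theorem sum_extend {M : Type*} [AddCommMonoid M] (m n : ℕ) (h : m ≤ n) (f : ℕ → M)
    (hf : ∀ k, m ≤ k → f k = 0) : ∑ k ∈ range n, f k = ∑ k ∈ range m, f k :=
  (Finset.sum_subset (Finset.range_subset_range.mpr h) fun k _ hk' =>
    hf k (not_lt.mp fun hlt => hk' (Finset.mem_range.mpr hlt))).symm

theorem shift_key {M : Type*} [AddCommMonoid M] [Module ℝ M] (B i : ℕ) (hi : i ≤ B)
    (V : ℕ → ℕ → M) (hV : ∀ k m, B ≤ m → V k m = 0) :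
    ∑ k ∈ range (2*B), ((k.factorial : ℝ))⁻¹ • ((k.descFactorial i : ℕ) : ℝ) • V k (k - i)
      = ∑ k ∈ range (2*B), ((k.factorial : ℝ))⁻¹ • V (k + i) k := by
  have hzero : ∀ k < i,
      ((k.factorial : ℝ))⁻¹ • ((k.descFactorial i : ℕ) : ℝ) • V k (k - i) = 0 := by
    intro k hk
    rw [Nat.descFactorial_eq_zero_iff_lt.mpr hk]
    simp
  have h1 : ∑ k ∈ range (2*B), ((k.factorial : ℝ))⁻¹ • ((k.descFactorial i : ℕ) : ℝ) • V k (k - i)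
      = ∑ k ∈ Finset.Ico i (2*B),
          ((k.factorial : ℝ))⁻¹ • ((k.descFactorial i : ℕ) : ℝ) • V k (k - i) := by
    rw [Finset.range_eq_Ico]
    refine (Finset.sum_subset (Finset.Ico_subset_Ico (Nat.zero_le _) le_rfl) ?_).symm
    intro k hk hk'
    have : k < i := by
      rcases Finset.mem_Ico.mp hk with ⟨_, hk2⟩
      by_contra hc
      exact hk' (Finset.mem_Ico.mpr ⟨not_lt.mp hc, hk2⟩)
    exact hzero k this
  rw [h1, Finset.sum_Ico_eq_sum_range]
  have h2 : ∀ k, ((i + k).factorial : ℝ)⁻¹ • (((i+k).descFactorial i : ℕ) : ℝ) • V (i+k) (i+k-i)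
      = ((k.factorial : ℝ))⁻¹ • V (k + i) k := by
    intro k
    rw [smul_smul]
    have e1 : i + k = k + i := by omega
    have e2 : i + k - i = k := by omega
    rw [e1]
    have e2' : k + i - i = k := by omega
    rw [e2', fact_inv_descF k i]
  rw [Finset.sum_congr rfl fun k _ => h2 k]
  refine (sum_extend (2*B - i) (2*B) (by omega) _ ?_).symm
  intro k hk
  rw [hV (k+i) k (by omega), smul_zero]

include hLeib hgen in
theorem tri_eq (ℓ : 𝔏) (p q : MvPolynomial (𝔏 × ℕ) ℝ) (N : ℕ)
    (hN : ∀ k, N ≤ k → pderiv (ℓ, k) q = 0) :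
    triIns D ℓ p q = ∑ k ∈ range N, ((k.factorial : ℝ))⁻¹ • (Dp D k p * pderiv (ℓ, k) q) := by
  classical
  set f : 𝔏 × ℕ → MvPolynomial (𝔏 × ℕ) ℝ :=
    fun x => ((x.2.factorial : ℝ))⁻¹ • (Dp D x.2 p * pderiv x q) with hf
  have hstart : triIns D ℓ p q = ∑ x ∈ q.vars.filter (fun x => x.1 = ℓ), f x := rfl
  have himg : ∑ k ∈ range N, ((k.factorial : ℝ))⁻¹ • (Dp D k p * pderiv (ℓ, k) q)
      = ∑ x ∈ (range N).image (fun k => (ℓ, k)), f x := by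
    rw [Finset.sum_image (fun a _ b _ h => by
      simpa using congrArg Prod.snd h)]
  rw [hstart, himg]
  set F := q.vars.filter (fun x => x.1 = ℓ) with hF
  set G := (range N).image (fun k => (ℓ, k)) with hG
  have h1 : ∑ x ∈ F, f x = ∑ x ∈ F ∪ G, f x := by
    refine Finset.sum_subset Finset.subset_union_left ?_
    intro x hx hxF
    rcases Finset.mem_union.mp hx with h | h
    · exact absurd h hxF
    · obtain ⟨k, _, rfl⟩ := Finset.mem_image.mp h
      have hv : (ℓ, k) ∉ q.vars := fun hv => hxF (Finset.mem_filter.mpr ⟨hv, rfl⟩)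
      rw [hf]
      simp only [pderiv_eq_zero_of_notMem_vars hv, mul_zero, smul_zero]
  have h2 : ∑ x ∈ G, f x = ∑ x ∈ F ∪ G, f x := by
    refine Finset.sum_subset Finset.subset_union_right ?_
    intro x hx hxG
    rcases Finset.mem_union.mp hx with h | h
    · obtain ⟨x1, x2⟩ := x
      have hxl : x1 = ℓ := by simpa using (Finset.mem_filter.mp h).2
      subst hxl
      have hk : N ≤ x2 := by
        by_contra hlt
        exact hxG (Finset.mem_image.mpr ⟨x2, Finset.mem_range.mpr (not_le.mp hlt), rfl⟩)
      rw [hf]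
      simp only [hN x2 hk, mul_zero, smul_zero]
    · exact absurd h hxG
  rw [h1, h2]


theorem Dp_comp (i k : ℕ) (p : MvPolynomial (𝔏 × ℕ) ℝ) :
    Dp D i (Dp D k p) = Dp D (k + i) p := by
  show _ = ((D : Module.End ℝ (MvPolynomial (𝔏 × ℕ) ℝ)) ^ (k+i)) p
  rw [show k + i = i + k from by omega, pow_add, Module.End.mul_apply]
  rfl

theorem exists_bound (q : MvPolynomial (𝔏 × ℕ) ℝ) :
    ∃ N, ∀ (m : 𝔏) (k : ℕ), N ≤ k → pderiv (m, k) q = 0 := by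
  refine ⟨(q.vars.sup Prod.snd) + 1, fun m k hk => ?_⟩
  apply pderiv_eq_zero_of_notMem_vars
  intro hv
  have := Finset.le_sup (f := Prod.snd) hv
  simp only at this
  omega

include hLeib hgen in
theorem pderiv_Dpow' (m : 𝔏) (k n : ℕ) (q : MvPolynomial (𝔏 × ℕ) ℝ) :
    pderiv (m, k) (Dp D n q) = ∑ i ∈ range (n+1),
      ((n.choose i * k.descFactorial i : ℕ) : ℝ) • Dp D (n-i) (pderiv (m, k - i) q) :=
  pderiv_Dpow D hLeib hgen (m, k) n q

include hLeib hgen in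
theorem half (B : ℕ) (l l' : 𝔏) (a b c : MvPolynomial (𝔏 × ℕ) ℝ)
    (hb : ∀ (m : 𝔏) (k : ℕ), B ≤ k → pderiv (m, k) b = 0)
    (hc : ∀ (m : 𝔏) (k : ℕ), B ≤ k → pderiv (m, k) c = 0)
    (ht1 : ∀ (m : 𝔏) (k : ℕ), B ≤ k → pderiv (m, k) (triIns D l' b c) = 0) :
    triIns D l a (triIns D l' b c) - triIns D l' (triIns D l a b) c
      = ∑ k ∈ range (2*B), ∑ j ∈ range B,
          ((k.factorial : ℝ))⁻¹ • ((j.factorial : ℝ))⁻¹ •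
            (Dp D k a * (Dp D j b * pderiv (l, k) (pderiv (l', j) c))) := by
  have h2B : B ≤ 2*B := by omega
  have e1 : triIns D l a (triIns D l' b c) = ∑ k ∈ range (2*B),
      ((k.factorial : ℝ))⁻¹ • (Dp D k a * pderiv (l,k) (triIns D l' b c)) :=
    tri_eq D hLeib hgen l a _ (2*B) (fun k hk => ht1 l k (le_trans h2B hk))
  have e2 : triIns D l' b c = ∑ j ∈ range B,
      ((j.factorial : ℝ))⁻¹ • (Dp D j b * pderiv (l',j) c) :=
    tri_eq D hLeib hgen l' b c B (fun j hj => hc l' j hj)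
  have e3 : triIns D l' (triIns D l a b) c = ∑ j ∈ range B,
      ((j.factorial : ℝ))⁻¹ • (Dp D j (triIns D l a b) * pderiv (l',j) c) :=
    tri_eq D hLeib hgen l' _ c B (fun j hj => hc l' j hj)
  have e4 : triIns D l a b = ∑ k ∈ range (2*B),
      ((k.factorial:ℝ))⁻¹ • (Dp D k a * pderiv (l,k) b) :=
    tri_eq D hLeib hgen l a b (2*B) (fun k hk => hb l k (le_trans h2B hk))
  have hL : triIns D l a (triIns D l' b c)
      = (∑ k ∈ range (2*B), ∑ j ∈ range B, ((k.factorial:ℝ))⁻¹ • ((j.factorial:ℝ))⁻¹ •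
          (Dp D k a * (pderiv (l,k) (Dp D j b) * pderiv (l',j) c)))
        + ∑ k ∈ range (2*B), ∑ j ∈ range B, ((k.factorial:ℝ))⁻¹ • ((j.factorial:ℝ))⁻¹ •
          (Dp D k a * (Dp D j b * pderiv (l,k) (pderiv (l',j) c))) := by
    rw [e1, ← Finset.sum_add_distrib]
    refine Finset.sum_congr rfl fun k _ => ?_
    rw [e2, map_sum, Finset.mul_sum, Finset.smul_sum, ← Finset.sum_add_distrib]
    refine Finset.sum_congr rfl fun j _ => ?_
    rw [(pderiv (l,k)).map_smul, pderiv_mul, mul_smul_comm, mul_add, smul_add, smul_add]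
  have hR : triIns D l' (triIns D l a b) c
      = ∑ j ∈ range B, ∑ k ∈ range (2*B), ∑ i ∈ range (j+1),
          ((j.factorial:ℝ))⁻¹ • ((k.factorial:ℝ))⁻¹ • ((j.choose i : ℕ):ℝ) •
            (Dp D (k+i) a * (Dp D (j-i) (pderiv (l,k) b) * pderiv (l',j) c)) := by
    rw [e3]
    refine Finset.sum_congr rfl fun j _ => ?_
    rw [e4, map_sum, Finset.sum_mul, Finset.smul_sum]
    refine Finset.sum_congr rfl fun k _ => ?_
    rw [map_smul, Dpow_mul D hLeib j (Dp D k a) (pderiv (l,k) b)]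
    rw [smul_mul_assoc, Finset.sum_mul, Finset.smul_sum, Finset.smul_sum]
    refine Finset.sum_congr rfl fun i _ => ?_
    rw [smul_mul_assoc, mul_assoc, Dp_comp]
  have hS1 : (∑ k ∈ range (2*B), ∑ j ∈ range B, ((k.factorial:ℝ))⁻¹ • ((j.factorial:ℝ))⁻¹ •
          (Dp D k a * (pderiv (l,k) (Dp D j b) * pderiv (l',j) c)))
      = ∑ j ∈ range B, ∑ k ∈ range (2*B), ∑ i ∈ range (j+1),
          ((j.factorial:ℝ))⁻¹ • ((k.factorial:ℝ))⁻¹ • ((j.choose i : ℕ):ℝ) •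
            (Dp D (k+i) a * (Dp D (j-i) (pderiv (l,k) b) * pderiv (l',j) c)) := by
    rw [Finset.sum_comm]
    refine Finset.sum_congr rfl fun j hj => ?_
    have hexp : ∀ k, ((k.factorial:ℝ))⁻¹ • ((j.factorial:ℝ))⁻¹ •
          (Dp D k a * (pderiv (l,k) (Dp D j b) * pderiv (l',j) c))
        = ∑ i ∈ range (j+1), ((k.factorial:ℝ))⁻¹ • ((j.factorial:ℝ))⁻¹ •
            (((j.choose i * k.descFactorial i : ℕ):ℝ)) •
            (Dp D k a * (Dp D (j-i) (pderiv (l, k - i) b) * pderiv (l',j) c)) := by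
      intro k
      rw [pderiv_Dpow' D hLeib hgen l k j b, Finset.sum_mul, Finset.mul_sum,
        Finset.smul_sum, Finset.smul_sum]
      refine Finset.sum_congr rfl fun i _ => ?_
      rw [smul_mul_assoc, mul_smul_comm]
    rw [Finset.sum_congr rfl (fun k _ => hexp k), Finset.sum_comm]
    calc ∑ i ∈ range (j+1), ∑ k ∈ range (2*B),
        ((k.factorial:ℝ))⁻¹ • ((j.factorial:ℝ))⁻¹ •
            (((j.choose i * k.descFactorial i : ℕ):ℝ)) •
            (Dp D k a * (Dp D (j-i) (pderiv (l, k - i) b) * pderiv (l',j) c))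
        = ∑ i ∈ range (j+1), ∑ k ∈ range (2*B),
          ((j.factorial:ℝ))⁻¹ • ((k.factorial:ℝ))⁻¹ • ((j.choose i : ℕ):ℝ) •
            (Dp D (k+i) a * (Dp D (j-i) (pderiv (l,k) b) * pderiv (l',j) c)) := by
          refine Finset.sum_congr rfl fun i hi => ?_
          have hiB : i ≤ B := by
            have h1 : i ≤ j := Nat.lt_succ_iff.mp (Finset.mem_range.mp hi)
            have h2 : j < B := Finset.mem_range.mp hj
            omega
          have hsk := shift_key (M := MvPolynomial (𝔏 × ℕ) ℝ) B i hiB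
            (fun k m => ((j.factorial:ℝ))⁻¹ • ((j.choose i : ℕ):ℝ) •
              (Dp D k a * (Dp D (j-i) (pderiv (l,m) b) * pderiv (l',j) c)))
            (fun k m hm => by simp [hb l m hm])
          calc ∑ k ∈ range (2*B),
              ((k.factorial:ℝ))⁻¹ • ((j.factorial:ℝ))⁻¹ •
                (((j.choose i * k.descFactorial i : ℕ):ℝ)) •
                (Dp D k a * (Dp D (j-i) (pderiv (l, k - i) b) * pderiv (l',j) c))
              = ∑ k ∈ range (2*B), ((k.factorial : ℝ))⁻¹ • ((k.descFactorial i : ℕ) : ℝ) •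
                  ((j.factorial:ℝ))⁻¹ • ((j.choose i : ℕ):ℝ) •
                  (Dp D k a * (Dp D (j-i) (pderiv (l, k - i) b) * pderiv (l',j) c)) := by
                refine Finset.sum_congr rfl fun k _ => ?_
                rw [smul_smul, smul_smul, smul_smul, smul_smul, smul_smul]
                congr 1
                push_cast
                ring
            _ = ∑ k ∈ range (2*B), ((k.factorial : ℝ))⁻¹ •
                  ((j.factorial:ℝ))⁻¹ • ((j.choose i : ℕ):ℝ) •
                  (Dp D (k+i) a * (Dp D (j-i) (pderiv (l,k) b) * pderiv (l',j) c)) := hsk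
            _ = ∑ k ∈ range (2*B),
                  ((j.factorial:ℝ))⁻¹ • ((k.factorial:ℝ))⁻¹ • ((j.choose i : ℕ):ℝ) •
                  (Dp D (k+i) a * (Dp D (j-i) (pderiv (l,k) b) * pderiv (l',j) c)) := by
                refine Finset.sum_congr rfl fun k _ => ?_
                rw [smul_smul, smul_smul, smul_smul, smul_smul]
                congr 1
                ring
      _ = ∑ k ∈ range (2*B), ∑ i ∈ range (j+1),
          ((j.factorial:ℝ))⁻¹ • ((k.factorial:ℝ))⁻¹ • ((j.choose i : ℕ):ℝ) •
            (Dp D (k+i) a * (Dp D (j-i) (pderiv (l,k) b) * pderiv (l',j) c)) :=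
          Finset.sum_comm
  rw [hL, hR, ← hS1]
  abel


include hLeib hgen in
theorem key_identity (ℓ ℓ' : 𝔏) (π π' π'' : MvPolynomial (𝔏 × ℕ) ℝ) :
    triIns D ℓ π (triIns D ℓ' π' π'') - triIns D ℓ' (triIns D ℓ π π') π''
      = triIns D ℓ' π' (triIns D ℓ π π'') - triIns D ℓ (triIns D ℓ' π' π) π'' := by
  obtain ⟨N1, h1⟩ := exists_bound (𝔏 := 𝔏) π
  obtain ⟨N2, h2⟩ := exists_bound (𝔏 := 𝔏) π'
  obtain ⟨N3, h3⟩ := exists_bound (𝔏 := 𝔏) π''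
  obtain ⟨N4, h4⟩ := exists_bound (triIns D ℓ' π' π'')
  obtain ⟨N5, h5⟩ := exists_bound (triIns D ℓ π π'')
  set B := N1 ⊔ N2 ⊔ N3 ⊔ N4 ⊔ N5 with hB
  have b1 : ∀ (m : 𝔏) (k : ℕ), B ≤ k → pderiv (m, k) π = 0 :=
    fun m k hk => h1 m k (by omega)
  have b2 : ∀ (m : 𝔏) (k : ℕ), B ≤ k → pderiv (m, k) π' = 0 :=
    fun m k hk => h2 m k (by omega)
  have b3 : ∀ (m : 𝔏) (k : ℕ), B ≤ k → pderiv (m, k) π'' = 0 :=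
    fun m k hk => h3 m k (by omega)
  have b4 : ∀ (m : 𝔏) (k : ℕ), B ≤ k → pderiv (m, k) (triIns D ℓ' π' π'') = 0 :=
    fun m k hk => h4 m k (by omega)
  have b5 : ∀ (m : 𝔏) (k : ℕ), B ≤ k → pderiv (m, k) (triIns D ℓ π π'') = 0 :=
    fun m k hk => h5 m k (by omega)
  have H1 := half D hLeib hgen B ℓ ℓ' π π' π'' b2 b3 b4
  have H2 := half D hLeib hgen B ℓ' ℓ π' π π'' b1 b3 b5
  have ext : ∀ (u v : 𝔏) (p q : MvPolynomial (𝔏 × ℕ) ℝ),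
      (∑ k ∈ range (2*B), ∑ j ∈ range B, ((k.factorial:ℝ))⁻¹ • ((j.factorial:ℝ))⁻¹ •
          (Dp D k p * (Dp D j q * pderiv (u,k) (pderiv (v,j) π''))))
      = ∑ k ∈ range (2*B), ∑ j ∈ range (2*B), ((k.factorial:ℝ))⁻¹ • ((j.factorial:ℝ))⁻¹ •
          (Dp D k p * (Dp D j q * pderiv (u,k) (pderiv (v,j) π''))) := by
    intro u v p q
    refine Finset.sum_congr rfl fun k _ => ?_
    exact (sum_extend B (2*B) (by omega) _ (fun j hj => by simp [b3 v j hj])).symm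
  rw [H1, H2, ext ℓ ℓ' π π', ext ℓ' ℓ π' π, Finset.sum_comm]
  refine Finset.sum_congr rfl fun x _ => Finset.sum_congr rfl fun y _ => ?_
  rw [pderiv_comm, smul_comm]
  congr 1
  congr 1
  ring

end TriAux

/-- For each `ℓ ∈ 𝔏`, `▷_ℓ` maps `T × T` into `T`, each `▷_ℓ` is a pre-Lie product on `T`,
and the family `{▷_ℓ}` forms a multi pre-Lie algebra:
`π ▷_ℓ (π' ▷_{ℓ'} π'') − (π ▷_ℓ π') ▷_{ℓ'} π'' = π' ▷_{ℓ'} (π ▷_ℓ π'') − (π' ▷_{ℓ'} π) ▷_ℓ π''`. -/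
theorem triIns_multiPreLie {𝔏 : Type*} [Fintype 𝔏] [DecidableEq 𝔏]
    (D : MvPolynomial (𝔏 × ℕ) ℝ →ₗ[ℝ] MvPolynomial (𝔏 × ℕ) ℝ)
    (hLeib : ∀ p q : MvPolynomial (𝔏 × ℕ) ℝ, D (p * q) = D p * q + p * D q)
    (hgen : ∀ x : 𝔏 × ℕ, D (X x) = ((x.2 : ℝ) + 1) • X (x.1, x.2 + 1)) :
    (∀ ℓ : 𝔏, ∀ π ∈ Tspan 𝔏, ∀ π' ∈ Tspan 𝔏, triIns D ℓ π π' ∈ Tspan 𝔏)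
    ∧ (∀ ℓ ℓ' : 𝔏, ∀ π ∈ Tspan 𝔏, ∀ π' ∈ Tspan 𝔏, ∀ π'' ∈ Tspan 𝔏,
        triIns D ℓ π (triIns D ℓ' π' π'') - triIns D ℓ' (triIns D ℓ π π') π''
          = triIns D ℓ' π' (triIns D ℓ π π'') - triIns D ℓ (triIns D ℓ' π' π) π'') := by
  constructor
  · intro ℓ π hπ π' hπ'
    have hWπ : π ∈ TriAux.W 𝔏 1 := hπ
    have hWπ' : π' ∈ TriAux.W 𝔏 1 := hπ'
    show triIns D ℓ π π' ∈ TriAux.W 𝔏 1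
    unfold triIns
    refine Submodule.sum_mem _ fun x hx => Submodule.smul_mem _ _ ?_
    have hmul := TriAux.W_mul (TriAux.Dpow_mem D hLeib hgen hWπ x.2)
      (TriAux.pderiv_mem hWπ' x)
    exact TriAux.W_cast (by push_cast; ring) hmul
  · intro ℓ ℓ' π _ π' _ π'' _
    exact TriAux.key_identity D hLeib hgen ℓ ℓ' π π' π''
end
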